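/- Let G be a locally compact Polish abelian group and let H be a Borel measurable subgroup of G of at most countable index. Then H is open. -/

import Mathlib

open MeasureTheory Set Pointwise

/-- Let `G` be a locally compact Polish abelian group and `H` a Borel measurable
subgroup of at most countable index. Then `H` is open. -/
theorem borel_subgroup_countable_index_isOpen
    {G : Type*} [TopologicalSpace G] [PolishSpace G] [CommGroup G]
    [IsTopologicalGroup G] [LocallyCompactSpace G]
    [MeasurableSpace G] [BorelSpace G]
    (H : Subgroup G) (hmeas : MeasurableSet (H : Set G))
    (hcount : Countable (G ⧸ H)) :
    IsOpen (H : Set G) := by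
  let μ : Measure G := Measure.haar
  -- the translates of `H` by coset representatives cover `G`
  have hcov : (⋃ q : G ⧸ H, (Quotient.out q) • (H : Set G)) = univ := by
    ext x
    simp only [mem_iUnion, mem_univ, iff_true]
    exact ⟨QuotientGroup.mk x, by
      rw [mem_smul_set_iff_inv_smul_mem]
      have : (QuotientGroup.mk (Quotient.out (QuotientGroup.mk x : G ⧸ H)) : G ⧸ H)
          = QuotientGroup.mk x := Quotient.out_eq' _
      have hm : x⁻¹ * Quotient.out (QuotientGroup.mk x : G ⧸ H) ∈ H :=
        QuotientGroup.eq.mp this.symm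
      show (Quotient.out (QuotientGroup.mk x : G ⧸ H))⁻¹ * x ∈ H
      simpa [mul_comm] using H.inv_mem hm⟩
  -- hence `H` has positive Haar measure
  have hpos : 0 < μ (H : Set G) := by
    by_contra h
    push_neg at h
    have h0 : μ (H : Set G) = 0 := le_antisymm h bot_le
    have huniv : μ univ = 0 := by
      rw [← hcov]
      refine measure_iUnion_null fun q => ?_
      rw [measure_smul]
      exact h0
    exact (isOpen_univ.measure_pos μ univ_nonempty).ne' huniv
  -- Steinhaus: `H / H = H` is a neighbourhood of `1`
  have hnhds : (H : Set G) ∈ nhds (1 : G) := by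
    have := Measure.div_mem_nhds_one_of_haar_pos μ (H : Set G) hmeas hpos
    rwa [show (H : Set G) / (H : Set G) = (H : Set G) from ?_] at this
    apply Subset.antisymm
    · rintro x ⟨a, ha, b, hb, rfl⟩
      exact H.div_mem ha hb
    · intro x hx
      exact ⟨x, hx, 1, H.one_mem, by simp⟩
  exact Subgroup.isOpen_of_mem_nhds H hnhds
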